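/- Let σ be an admissible sequence and r ∈ [1,∞), and for h > −d/p let γ^{(h)} be admissible with common Boyd index ζ(h) := s̲(γ^{(h)}/σ) = s̄(γ^{(h)}/σ). Fix h, δ > 0, (ε_j) a positive sequence, and define E_j := {λ ∈ Λ_j : d_λ ≥ ε_j 2^{−δj}/γ^{(h)}_j}, where Λ_j is the set of dyadic cubes of side 2^{−j} and (d_λ) are nonnegative reals satisfying σ_j^r 2^{−jd} Σ_{λ∈Λ_j} d_λ^r ≤ ε_j^r for all j. Then #E_j ≤ 2^{jd}(2^{−δj}/γ^{(h)}_j)^{−r}σ_j^{−r}, and consequently, for every η > 0, the Hausdorff dimension of F := limsup_j ⋃_{λ∈E_j} 3λ is at most d + r(ζ(h) + δ + η). -/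

import Mathlib

open MeasureTheory Filter Metric Topology
open scoped ENNReal NNReal

/-- A sequence of positive reals is admissible if consecutive terms are comparable. -/
def Admissible (σ : ℕ → ℝ) : Prop :=
  (∀ j, 0 < σ j) ∧ ∃ C > (0:ℝ), ∀ j, C⁻¹ * σ j ≤ σ (j + 1) ∧ σ (j + 1) ≤ C * σ j

noncomputable def lowerRatio (σ : ℕ → ℝ) (j : ℕ) : ℝ := ⨅ k : ℕ, σ (j + k) / σ k

noncomputable def upperRatio (σ : ℕ → ℝ) (j : ℕ) : ℝ := ⨆ k : ℕ, σ (j + k) / σ k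

/-- `s` is the lower Boyd index of `σ`. -/
def IsLowerBoyd (σ : ℕ → ℝ) (s : ℝ) : Prop :=
  Filter.Tendsto (fun j : ℕ => Real.logb 2 (lowerRatio σ j) / j) Filter.atTop (nhds s)

/-- `s` is the upper Boyd index of `σ`. -/
def IsUpperBoyd (σ : ℕ → ℝ) (s : ℝ) : Prop :=
  Filter.Tendsto (fun j : ℕ => Real.logb 2 (upperRatio σ j) / j) Filter.atTop (nhds s)

/-- The union `3λ` of the dyadic cube `λ_{j,k}` and its neighbours. -/
def threeCube (d : ℕ) (j : ℕ) (k : Fin d → ℤ) : Set (EuclideanSpace ℝ (Fin d)) :=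
  {x | ∀ i, ((k i : ℝ) - 1) / 2 ^ j ≤ x i ∧ x i ≤ ((k i : ℝ) + 2) / 2 ^ j}

/-- Chebyshev counting bound. -/
lemma cheb {I : Type*} (f : I → ℝ) (hf : ∀ k, 0 ≤ f k) (hs : Summable f) (c : ℝ) (hc : 0 < c) :
    {k | c ≤ f k}.Finite ∧ ({k | c ≤ f k}.ncard : ℝ) * c ≤ ∑' k, f k := by
  have hfin : {k | c ≤ f k}.Finite := by
    have h := hs.tendsto_cofinite_zero.eventually (gt_mem_nhds hc)
    rw [Filter.eventually_cofinite] at h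
    exact h.subset fun k hk => by simpa using not_lt.2 hk
  refine ⟨hfin, ?_⟩
  have h1 : (hfin.toFinset.card) • c ≤ ∑ k ∈ hfin.toFinset, f k :=
    Finset.card_nsmul_le_sum _ _ _ fun k hk => by simpa using (hfin.mem_toFinset.1 hk)
  have h2 : ∑ k ∈ hfin.toFinset, f k ≤ ∑' k, f k := Summable.sum_le_tsum _ (fun k _ => hf k) hs
  rw [Set.ncard_eq_toFinset_card _ hfin]
  calc ((hfin.toFinset.card : ℝ)) * c = hfin.toFinset.card • c := (nsmul_eq_mul _ _).symm
    _ ≤ _ := h1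
    _ ≤ _ := h2

/-- An eventual upper bound from the upper Boyd index. -/
lemma boyd_bound (τ : ℕ → ℝ) (hτ : ∀ j, 0 < τ j) (C : ℝ) (hC0 : 0 < C)
    (hC : ∀ j, τ (j + 1) ≤ C * τ j) (ζ : ℝ) (h : IsUpperBoyd τ ζ) (η : ℝ) (hη : 0 < η) :
    ∀ᶠ j : ℕ in atTop, τ j ≤ τ 0 * 2 ^ ((j : ℝ) * (ζ + η)) := by
  have hstep : ∀ k j : ℕ, τ (j + k) ≤ C ^ j * τ k := by
    intro k j
    induction j with
    | zero => simp
    | succ n ih =>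
      calc τ (n + 1 + k) = τ (k + n + 1) := by ring_nf
        _ ≤ C * τ (k + n) := hC _
        _ ≤ C * (C ^ n * τ k) := by
            have := ih
            rw [add_comm n k] at this
            nlinarith [this]
        _ = C ^ (n + 1) * τ k := by ring
  have hbdd : ∀ j : ℕ, BddAbove (Set.range fun k => τ (j + k) / τ k) := by
    intro j
    refine ⟨C ^ j, ?_⟩
    rintro x ⟨k, rfl⟩
    exact (div_le_iff₀ (hτ k)).2 (hstep k j)
  have hle : ∀ j : ℕ, τ j / τ 0 ≤ upperRatio τ j := by
    intro j
    have := le_ciSup (hbdd j) 0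
    simpa [upperRatio] using this
  have hpos : ∀ j : ℕ, 0 < upperRatio τ j :=
    fun j => lt_of_lt_of_le (div_pos (hτ j) (hτ 0)) (hle j)
  have h2 : ∀ᶠ j : ℕ in atTop, Real.logb 2 (upperRatio τ j) / j < ζ + η :=
    h.eventually_lt_const (by linarith)
  filter_upwards [h2, eventually_ge_atTop 1] with j hj hj1
  have hjpos : (0:ℝ) < j := by exact_mod_cast hj1
  have : Real.logb 2 (upperRatio τ j) < (j : ℝ) * (ζ + η) := by
    rw [div_lt_iff₀ hjpos] at hj; linarith [hj]
  have hub : upperRatio τ j ≤ (2:ℝ) ^ ((j : ℝ) * (ζ + η)) :=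
    le_of_lt ((Real.logb_lt_iff_lt_rpow (by norm_num) (hpos j)).1 this)
  have := (hle j).trans hub
  rw [div_le_iff₀ (hτ 0)] at this
  linarith [this]

/-- Diameter bound for `threeCube`. -/
lemma diam_threeCube (d : ℕ) (J : ℕ) (k : Fin d → ℤ) :
    EMetric.diam (threeCube d J k) ≤ ENNReal.ofReal (3 * Real.sqrt d * (1/2:ℝ) ^ J) := by
  refine EMetric.diam_le fun x hx y hy => ?_
  rw [edist_dist]
  refine ENNReal.ofReal_le_ofReal ?_
  have hxy : ∀ i, dist (x i) (y i) ≤ 3 * (1/2:ℝ) ^ J := by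
    intro i
    have hx1 := (hx i).1; have hx2 := (hx i).2
    have hy1 := (hy i).1; have hy2 := (hy i).2
    have h2J : (0:ℝ) < 2 ^ J := by positivity
    have hd : ((k i : ℝ) + 2) / 2 ^ J - ((k i : ℝ) - 1) / 2 ^ J = 3 * (1/2:ℝ) ^ J := by
      field_simp
      have h2 : (2:ℝ) ^ J * (1/2:ℝ) ^ J = 1 := by rw [← mul_pow]; norm_num
      linear_combination (-3:ℝ) * h2
    rw [Real.dist_eq, abs_le]
    constructor <;> nlinarith [hx1, hx2, hy1, hy2]
  rw [EuclideanSpace.dist_eq]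
  have hsum : (∑ i : Fin d, dist (x i) (y i) ^ 2) ≤ (d : ℝ) * (3 * (1/2:ℝ) ^ J) ^ 2 := by
    calc (∑ i : Fin d, dist (x i) (y i) ^ 2) ≤ ∑ _i : Fin d, (3 * (1/2:ℝ) ^ J) ^ 2 :=
          Finset.sum_le_sum fun i _ =>
            sq_le_sq' (by nlinarith [hxy i, dist_nonneg (x := x i) (y := y i)]) (hxy i)
      _ = (d : ℝ) * (3 * (1/2:ℝ) ^ J) ^ 2 := by
          rw [Finset.sum_const, Finset.card_univ, Fintype.card_fin, nsmul_eq_mul]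
  calc Real.sqrt (∑ i : Fin d, dist (x i) (y i) ^ 2)
      ≤ Real.sqrt ((d : ℝ) * (3 * (1/2:ℝ) ^ J) ^ 2) := Real.sqrt_le_sqrt hsum
    _ = Real.sqrt d * (3 * (1/2:ℝ) ^ J) := by
        rw [Real.sqrt_mul (by positivity), Real.sqrt_sq (by positivity)]
    _ = 3 * Real.sqrt d * (1/2:ℝ) ^ J := by ring

set_option maxHeartbeats 1600000 in
/-- counting bound for large wavelet leaders and the resulting bound on
the Hausdorff dimension of the associated limsup set. -/
theorem leader_counting_and_dimension (d : ℕ) (p r : ℝ≥0∞) (hp : 1 ≤ p)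
    (rr : ℝ) (hr : 1 ≤ rr)
    (σ γ : ℕ → ℝ) (hσ : Admissible σ) (hγ : Admissible γ)
    (ζ : ℝ) (hζl : IsLowerBoyd (fun j => γ j / σ j) ζ)
    (hζu : IsUpperBoyd (fun j => γ j / σ j) ζ)
    (δ : ℝ) (hδ : 0 < δ) (ε : ℕ → ℝ) (hε : ∀ j, 0 < ε j)
    (D : ℕ → (Fin d → ℤ) → ℝ) (hD : ∀ j k, 0 ≤ D j k)
    (hsum : ∀ j, Summable (fun k : Fin d → ℤ => D j k ^ rr))
    (hbound : ∀ j : ℕ,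
      σ j ^ rr * (2:ℝ) ^ (-(j : ℝ) * d) * (∑' k : Fin d → ℤ, D j k ^ rr) ≤ ε j ^ rr) :
    (∀ j : ℕ,
      {k : Fin d → ℤ | ε j * (2:ℝ) ^ (-δ * j) / γ j ≤ D j k}.Finite ∧
      ({k : Fin d → ℤ | ε j * (2:ℝ) ^ (-δ * j) / γ j ≤ D j k}.ncard : ℝ)
        ≤ (2:ℝ) ^ ((j : ℝ) * d) * ((2:ℝ) ^ (-δ * j) / γ j) ^ (-rr) * (σ j) ^ (-rr)) ∧
    (∀ η > (0:ℝ),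
      dimH {x : EuclideanSpace ℝ (Fin d) |
          ∃ᶠ j in atTop, ∃ k ∈ {k : Fin d → ℤ | ε j * (2:ℝ) ^ (-δ * j) / γ j ≤ D j k},
            x ∈ threeCube d j k}
        ≤ ENNReal.ofReal (d + rr * (ζ + δ + η))) := by
  obtain ⟨hσp, Cσ, hCσ0, hCσ⟩ := hσ
  obtain ⟨hγp, Cγ, hCγ0, hCγ⟩ := hγ
  have hrr0 : (0:ℝ) < rr := lt_of_lt_of_le one_pos hr
  have part1 : ∀ j : ℕ,
      {k : Fin d → ℤ | ε j * (2:ℝ) ^ (-δ * j) / γ j ≤ D j k}.Finite ∧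
      ({k : Fin d → ℤ | ε j * (2:ℝ) ^ (-δ * j) / γ j ≤ D j k}.ncard : ℝ)
        ≤ (2:ℝ) ^ ((j : ℝ) * d) * ((2:ℝ) ^ (-δ * j) / γ j) ^ (-rr) * (σ j) ^ (-rr) := by
    intro j
    set u : ℝ := (2:ℝ) ^ (-δ * (j:ℝ)) / γ j with hu
    have hu0 : 0 < u := div_pos (Real.rpow_pos_of_pos two_pos _) (hγp j)
    set t : ℝ := ε j * (2:ℝ) ^ (-δ * (j:ℝ)) / γ j with htdef
    have htu : t = ε j * u := by rw [htdef, hu]; ring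
    have ht0 : 0 < t := by rw [htu]; exact mul_pos (hε j) hu0
    have htr : 0 < t ^ rr := Real.rpow_pos_of_pos ht0 _
    obtain ⟨hfin, hcard⟩ := cheb (fun k : Fin d → ℤ => D j k ^ rr)
      (fun k => Real.rpow_nonneg (hD j k) _) (hsum j) (t ^ rr) htr
    have hsub : {k : Fin d → ℤ | ε j * (2:ℝ) ^ (-δ * j) / γ j ≤ D j k}
        ⊆ {k | t ^ rr ≤ D j k ^ rr} := fun k hk =>
      Real.rpow_le_rpow ht0.le hk hrr0.le
    have hfin' := hfin.subset hsub
    refine ⟨hfin', ?_⟩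
    have hcard' : ({k : Fin d → ℤ | ε j * (2:ℝ) ^ (-δ * j) / γ j ≤ D j k}.ncard : ℝ)
        ≤ ({k | t ^ rr ≤ D j k ^ rr}.ncard : ℝ) := by
      exact_mod_cast Set.ncard_le_ncard hsub hfin
    have hσr : 0 < σ j ^ rr := Real.rpow_pos_of_pos (hσp j) _
    have hεr : 0 < ε j ^ rr := Real.rpow_pos_of_pos (hε j) _
    have hur : 0 < u ^ rr := Real.rpow_pos_of_pos hu0 _
    have h2jd : 0 < (2:ℝ) ^ ((j:ℝ) * d) := Real.rpow_pos_of_pos two_pos _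
    have hS : (∑' k : Fin d → ℤ, D j k ^ rr) ≤ ε j ^ rr * ((2:ℝ) ^ ((j:ℝ) * d) * (σ j ^ rr)⁻¹) := by
      have hmul : (0:ℝ) < (2:ℝ) ^ ((j:ℝ) * d) * (σ j ^ rr)⁻¹ := mul_pos h2jd (inv_pos.2 hσr)
      have key := mul_le_mul_of_nonneg_right (hbound j) hmul.le
      have h2 : (2:ℝ) ^ (-(j:ℝ) * d) * (2:ℝ) ^ ((j:ℝ) * d) = 1 := by
        rw [← Real.rpow_add two_pos]; norm_num
      have h3 : σ j ^ rr * (σ j ^ rr)⁻¹ = 1 := mul_inv_cancel₀ hσr.ne'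
      calc (∑' k : Fin d → ℤ, D j k ^ rr)
          = (σ j ^ rr * (σ j ^ rr)⁻¹) * ((2:ℝ) ^ (-(j:ℝ) * d) * (2:ℝ) ^ ((j:ℝ) * d))
              * (∑' k : Fin d → ℤ, D j k ^ rr) := by rw [h2, h3]; ring
        _ = σ j ^ rr * (2:ℝ) ^ (-(j:ℝ) * d) * (∑' k : Fin d → ℤ, D j k ^ rr)
              * ((2:ℝ) ^ ((j:ℝ) * d) * (σ j ^ rr)⁻¹) := by ring
        _ ≤ _ := key
    have hN : ({k : Fin d → ℤ | ε j * (2:ℝ) ^ (-δ * j) / γ j ≤ D j k}.ncard : ℝ)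
        ≤ ε j ^ rr * ((2:ℝ) ^ ((j:ℝ) * d) * (σ j ^ rr)⁻¹) / t ^ rr := by
      rw [le_div_iff₀ htr]
      calc ({k : Fin d → ℤ | ε j * (2:ℝ) ^ (-δ * j) / γ j ≤ D j k}.ncard : ℝ) * t ^ rr
          ≤ ({k | t ^ rr ≤ D j k ^ rr}.ncard : ℝ) * t ^ rr :=
            mul_le_mul_of_nonneg_right hcard' htr.le
        _ ≤ _ := hcard
        _ ≤ _ := hS
    refine hN.trans (le_of_eq ?_)
    have htr2 : t ^ rr = ε j ^ rr * u ^ rr := by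
      rw [htu, Real.mul_rpow (hε j).le hu0.le]
    rw [htr2, Real.rpow_neg hu0.le, Real.rpow_neg (hσp j).le]
    field_simp
  refine ⟨part1, ?_⟩
  intro η hη
  rcases Nat.eq_zero_or_pos d with hd0 | hd
  · subst hd0
    haveI : Subsingleton (EuclideanSpace ℝ (Fin 0)) :=
      ⟨fun a b => PiLp.ext fun i => i.elim0⟩
    have h0 : dimH {x : EuclideanSpace ℝ (Fin 0) |
        ∃ᶠ j in atTop, ∃ k ∈ {k : Fin 0 → ℤ | ε j * (2:ℝ) ^ (-δ * j) / γ j ≤ D j k},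
          x ∈ threeCube 0 j k} = 0 :=
      dimH_subsingleton (Set.subsingleton_of_subsingleton)
    rw [h0]; exact bot_le
  -- positive dimension case
  have hτp : ∀ j, 0 < γ j / σ j := fun j => div_pos (hγp j) (hσp j)
  have hτstep : ∀ j, γ (j+1) / σ (j+1) ≤ (Cγ * Cσ) * (γ j / σ j) := by
    intro j
    have h1 : γ (j+1) ≤ Cγ * γ j := (hCγ j).2
    have h2 : Cσ⁻¹ * σ j ≤ σ (j+1) := (hCσ j).1
    have h3 : (0:ℝ) < Cσ⁻¹ * σ j := mul_pos (inv_pos.2 hCσ0) (hσp j)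
    calc γ (j+1) / σ (j+1) ≤ (Cγ * γ j) / (Cσ⁻¹ * σ j) :=
          div_le_div₀ (mul_pos hCγ0 (hγp j)).le h1 h3 h2
      _ = (Cγ * Cσ) * (γ j / σ j) := by field_simp
  have hboyd := boyd_bound (fun j => γ j / σ j) hτp (Cγ * Cσ) (mul_pos hCγ0 hCσ0)
    hτstep ζ hζu (η/2) (half_pos hη)
  set K : ℝ := (γ 0 / σ 0) ^ rr with hK
  have hK0 : 0 < K := Real.rpow_pos_of_pos (hτp 0) _
  set A : ℝ := (d:ℝ) + rr * (δ + ζ + η/2) with hA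
  set s : ℝ := (d:ℝ) + rr * (ζ + δ + η) with hsdef
  have hAs : A = s - rr * (η/2) := by rw [hA, hsdef]; ring
  -- eventual bound on the counting function
  have hNA : ∀ᶠ j : ℕ in atTop,
      ({k : Fin d → ℤ | ε j * (2:ℝ) ^ (-δ * j) / γ j ≤ D j k}.ncard : ℝ)
        ≤ K * 2 ^ ((j:ℝ) * A) := by
    filter_upwards [hboyd] with j hb
    have h1 := (part1 j).2
    have e1 : ((2:ℝ) ^ (-δ * (j:ℝ)) / γ j) ^ (-rr)
        = (2:ℝ) ^ (δ * (j:ℝ) * rr) * (γ j) ^ rr := by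
      rw [Real.div_rpow (by positivity) (hγp j).le,
        ← Real.rpow_mul (by norm_num : (0:ℝ) ≤ 2),
        Real.rpow_neg (hγp j).le, div_inv_eq_mul,
        show (-δ * (j:ℝ)) * (-rr) = δ * (j:ℝ) * rr by ring]
    have e2 : (σ j) ^ (-rr) = ((σ j) ^ rr)⁻¹ := Real.rpow_neg (hσp j).le _
    have e3 : (γ j / σ j) ^ rr = (γ j) ^ rr * ((σ j) ^ rr)⁻¹ := by
      rw [Real.div_rpow (hγp j).le (hσp j).le, div_eq_mul_inv]
    have e4 : (2:ℝ) ^ ((j:ℝ) * d) * ((2:ℝ) ^ (δ * (j:ℝ) * rr) * (γ j) ^ rr) * ((σ j) ^ rr)⁻¹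
        = (2:ℝ) ^ ((j:ℝ) * d + δ * (j:ℝ) * rr) * ((γ j / σ j) ^ rr) := by
      rw [e3, Real.rpow_add two_pos]; ring
    have h2 : ({k : Fin d → ℤ | ε j * (2:ℝ) ^ (-δ * j) / γ j ≤ D j k}.ncard : ℝ)
        ≤ (2:ℝ) ^ ((j:ℝ) * d + δ * (j:ℝ) * rr) * ((γ j / σ j) ^ rr) := by
      calc ({k : Fin d → ℤ | ε j * (2:ℝ) ^ (-δ * j) / γ j ≤ D j k}.ncard : ℝ)
          ≤ (2:ℝ) ^ ((j : ℝ) * d) * ((2:ℝ) ^ (-δ * j) / γ j) ^ (-rr) * (σ j) ^ (-rr) := h1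
        _ = _ := by rw [e1, e2, e4]
    have h3 : (γ j / σ j) ^ rr ≤ K * (2:ℝ) ^ ((j:ℝ) * (ζ + η/2) * rr) := by
      calc (γ j / σ j) ^ rr ≤ ((γ 0 / σ 0) * 2 ^ ((j:ℝ) * (ζ + η/2))) ^ rr :=
            Real.rpow_le_rpow (hτp j).le hb hrr0.le
        _ = K * (2:ℝ) ^ ((j:ℝ) * (ζ + η/2) * rr) := by
            rw [Real.mul_rpow (hτp 0).le (by positivity),
              ← Real.rpow_mul (by norm_num : (0:ℝ) ≤ 2), hK]
    calc ({k : Fin d → ℤ | ε j * (2:ℝ) ^ (-δ * j) / γ j ≤ D j k}.ncard : ℝ)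
        ≤ (2:ℝ) ^ ((j:ℝ) * d + δ * (j:ℝ) * rr) * ((γ j / σ j) ^ rr) := h2
      _ ≤ (2:ℝ) ^ ((j:ℝ) * d + δ * (j:ℝ) * rr) * (K * (2:ℝ) ^ ((j:ℝ) * (ζ + η/2) * rr)) :=
          mul_le_mul_of_nonneg_left h3 (by positivity)
      _ = K * 2 ^ ((j:ℝ) * A) := by
          rw [show (2:ℝ) ^ ((j:ℝ) * d + δ * (j:ℝ) * rr) * (K * 2 ^ ((j:ℝ) * (ζ + η/2) * rr))
              = K * ((2:ℝ) ^ ((j:ℝ) * d + δ * (j:ℝ) * rr) * (2:ℝ) ^ ((j:ℝ) * (ζ + η/2) * rr))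
              by ring,
            ← Real.rpow_add two_pos, hA,
            show (j:ℝ) * d + δ * (j:ℝ) * rr + (j:ℝ) * (ζ + η/2) * rr
              = (j:ℝ) * ((d:ℝ) + rr * (δ + ζ + η/2)) by ring]
  rcases lt_or_ge s 0 with hs | hs
  · -- negative exponent: the set is eventually empty
    have hA0 : A < 0 := by rw [hAs]; nlinarith [hrr0, hη]
    have hbase0 : (0:ℝ) ≤ (2:ℝ) ^ A := (Real.rpow_pos_of_pos two_pos A).le
    have hbase1 : (2:ℝ) ^ A < 1 := Real.rpow_lt_one_of_one_lt_of_neg one_lt_two hA0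
    have htend : Tendsto (fun j : ℕ => K * 2 ^ ((j:ℝ) * A)) atTop (𝓝 0) := by
      have h0 : Tendsto (fun j : ℕ => K * ((2:ℝ) ^ A) ^ j) atTop (𝓝 (K * 0)) :=
        (tendsto_pow_atTop_nhds_zero_of_lt_one hbase0 hbase1).const_mul K
      rw [mul_zero] at h0
      refine h0.congr fun j => ?_
      rw [← Real.rpow_natCast ((2:ℝ) ^ A) j, ← Real.rpow_mul (by norm_num : (0:ℝ) ≤ 2),
        mul_comm A (j:ℝ)]
    have hev : ∀ᶠ j : ℕ in atTop,
        {k : Fin d → ℤ | ε j * (2:ℝ) ^ (-δ * j) / γ j ≤ D j k} = ∅ := by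
      filter_upwards [hNA, htend.eventually (gt_mem_nhds one_pos)] with j h1 h2
      have : ({k : Fin d → ℤ | ε j * (2:ℝ) ^ (-δ * j) / γ j ≤ D j k}.ncard : ℝ) < 1 :=
        lt_of_le_of_lt h1 h2
      have hnc : {k : Fin d → ℤ | ε j * (2:ℝ) ^ (-δ * j) / γ j ≤ D j k}.ncard = 0 := by
        by_contra hne
        have : 1 ≤ ({k : Fin d → ℤ | ε j * (2:ℝ) ^ (-δ * j) / γ j ≤ D j k}.ncard : ℝ) := by
          exact_mod_cast Nat.one_le_iff_ne_zero.2 hne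
        linarith
      exact (Set.ncard_eq_zero (part1 j).1).1 hnc
    obtain ⟨j₀, hj₀⟩ := eventually_atTop.1 hev
    have hFe : {x : EuclideanSpace ℝ (Fin d) |
        ∃ᶠ j in atTop, ∃ k ∈ {k : Fin d → ℤ | ε j * (2:ℝ) ^ (-δ * j) / γ j ≤ D j k},
          x ∈ threeCube d j k} = ∅ := by
      rw [Set.eq_empty_iff_forall_notMem]
      intro x hx
      obtain ⟨j, hj, k, hk, -⟩ := (frequently_atTop.1 hx) j₀
      rw [hj₀ j hj] at hk
      exact hk
    rw [hFe, dimH_empty]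
    exact bot_le
  · -- main case: cover at small scales
    set θ : ℝ := rr * (η/2) with hθdef
    have hθ : 0 < θ := mul_pos hrr0 (half_pos hη)
    obtain ⟨j₀, hj₀⟩ := eventually_atTop.1 hNA
    set E : ℕ → Set (Fin d → ℤ) :=
      fun j => {k : Fin d → ℤ | ε j * (2:ℝ) ^ (-δ * j) / γ j ≤ D j k} with hE
    haveI : ∀ J : ℕ, Countable (↥(E J)) := fun J => ((part1 J).1.countable).to_subtype
    set F : Set (EuclideanSpace ℝ (Fin d)) :=
      {x : EuclideanSpace ℝ (Fin d) |
        ∃ᶠ j in atTop, ∃ k ∈ E j, x ∈ threeCube d j k} with hF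
    have hr0 : Tendsto (fun n : ℕ => ENNReal.ofReal (3 * Real.sqrt d * (1/2:ℝ) ^ n))
        atTop (𝓝 0) := by
      have h0 : Tendsto (fun n : ℕ => 3 * Real.sqrt d * (1/2:ℝ) ^ n) atTop
          (𝓝 (3 * Real.sqrt d * 0)) :=
        (tendsto_pow_atTop_nhds_zero_of_lt_one (by norm_num) (by norm_num)).const_mul _
      rw [mul_zero] at h0
      have := ENNReal.tendsto_ofReal h0
      simpa using this
    have hdi : ∀ᶠ n : ℕ in atTop, ∀ i : (j : ℕ) × ↥(E (n + j)),
        EMetric.diam (threeCube d (n + i.1) i.2.1)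
          ≤ ENNReal.ofReal (3 * Real.sqrt d * (1/2:ℝ) ^ n) := by
      refine Eventually.of_forall fun n => fun i => ?_
      refine (diam_threeCube d (n + i.1) i.2.1).trans (ENNReal.ofReal_le_ofReal ?_)
      have : ((1/2:ℝ)) ^ (n + i.1) ≤ (1/2:ℝ) ^ n :=
        pow_le_pow_of_le_one (by norm_num) (by norm_num) (Nat.le_add_right _ _)
      nlinarith [Real.sqrt_nonneg (d:ℝ), this]
    have hcov0 : ∀ᶠ n : ℕ in atTop,
        F ⊆ ⋃ i : (j : ℕ) × ↥(E (n + j)), threeCube d (n + i.1) i.2.1 := by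
      refine Eventually.of_forall fun n => fun x hx => ?_
      obtain ⟨J, hJ, k, hk, hxk⟩ := (frequently_atTop.1 hx) n
      obtain ⟨j, rfl⟩ : ∃ j, J = n + j := ⟨J - n, by omega⟩
      exact Set.mem_iUnion.2 ⟨⟨j, ⟨k, hk⟩⟩, hxk⟩
    have hcover := MeasureTheory.Measure.hausdorffMeasure_le_liminf_tsum
      (ι := fun n : ℕ => (j : ℕ) × ↥(E (n + j))) s F
      (fun n => ENNReal.ofReal (3 * Real.sqrt d * (1/2:ℝ) ^ n)) hr0
      (fun n i => threeCube d (n + i.1) i.2.1) hdi hcov0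
    set w : ℝ≥0∞ := ENNReal.ofReal ((2:ℝ) ^ (-θ)) with hw
    have hw1 : w < 1 := by
      rw [hw, ← ENNReal.ofReal_one]
      exact ENNReal.ofReal_lt_ofReal_iff_of_nonneg (by positivity) |>.2
        (Real.rpow_lt_one_of_one_lt_of_neg one_lt_two (neg_neg_of_pos hθ))
    set M0 : ℝ≥0∞ := ENNReal.ofReal (K * (3 * Real.sqrt d) ^ s) with hM0
    set M : ℝ≥0∞ := M0 * (1 - w)⁻¹ with hM
    have hsum_le : ∀ n : ℕ, j₀ ≤ n →
        (∑' i : (j : ℕ) × ↥(E (n + j)),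
          EMetric.diam (threeCube d (n + i.1) i.2.1) ^ s) ≤ M := by
      intro n hn
      have hterm : ∀ j : ℕ,
          (∑' k : ↥(E (n + j)), EMetric.diam (threeCube d (n + j) k.1) ^ s)
            ≤ M0 * w ^ (n + j) := by
        intro j
        set J := n + j with hJ
        have hJ0 : j₀ ≤ J := le_trans hn (Nat.le_add_right _ _)
        haveI := (part1 J).1.fintype
        have hc : (0:ℝ) < 3 * Real.sqrt d * (1/2:ℝ) ^ J := by
          have : (0:ℝ) < Real.sqrt d := Real.sqrt_pos.2 (by exact_mod_cast hd)
          positivity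
        have hb1 : ∀ k : ↥(E J), EMetric.diam (threeCube d J k.1) ^ s
            ≤ ENNReal.ofReal ((3 * Real.sqrt d * (1/2:ℝ) ^ J) ^ s) := by
          intro k
          rw [← ENNReal.ofReal_rpow_of_pos hc]
          exact ENNReal.rpow_le_rpow (diam_threeCube d J k.1) hs
        have hb2 : (∑' k : ↥(E J), EMetric.diam (threeCube d J k.1) ^ s)
            ≤ ((E J).ncard : ℝ≥0∞) * ENNReal.ofReal ((3 * Real.sqrt d * (1/2:ℝ) ^ J) ^ s) := by
          calc (∑' k : ↥(E J), EMetric.diam (threeCube d J k.1) ^ s)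
              ≤ ∑' _k : ↥(E J), ENNReal.ofReal ((3 * Real.sqrt d * (1/2:ℝ) ^ J) ^ s) :=
                ENNReal.tsum_le_tsum hb1
            _ = ((E J).ncard : ℝ≥0∞) * ENNReal.ofReal ((3 * Real.sqrt d * (1/2:ℝ) ^ J) ^ s) := by
                rw [tsum_fintype, Finset.sum_const, Finset.card_univ, nsmul_eq_mul,
                  Set.ncard_eq_toFinset_card', Set.toFinset_card]
        have hreal : ((E J).ncard : ℝ) * ((3 * Real.sqrt d * (1/2:ℝ) ^ J) ^ s)
            ≤ (K * (3 * Real.sqrt d) ^ s) * ((2:ℝ) ^ (-θ)) ^ J := by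
          have hN := hj₀ J hJ0
          have c0 : ((1/2:ℝ) ^ J) = (2:ℝ) ^ (-(J:ℝ)) := by
            rw [Real.rpow_neg (by norm_num : (0:ℝ) ≤ 2), Real.rpow_natCast, one_div, inv_pow]
          have c1 : (3 * Real.sqrt d * (1/2:ℝ) ^ J) ^ s
              = (3 * Real.sqrt d) ^ s * (2:ℝ) ^ (-(J:ℝ) * s) := by
            rw [Real.mul_rpow (by positivity) (by positivity), c0,
              ← Real.rpow_mul (by norm_num : (0:ℝ) ≤ 2)]
          have c2 : (2:ℝ) ^ ((J:ℝ) * A) * (2:ℝ) ^ (-(J:ℝ) * s) = ((2:ℝ) ^ (-θ)) ^ J := by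
            rw [← Real.rpow_add two_pos, ← Real.rpow_natCast ((2:ℝ) ^ (-θ)) J,
              ← Real.rpow_mul (by norm_num : (0:ℝ) ≤ 2)]
            congr 1
            rw [hAs]; ring
          rw [c1]
          calc ((E J).ncard : ℝ) * ((3 * Real.sqrt d) ^ s * (2:ℝ) ^ (-(J:ℝ) * s))
              ≤ (K * (2:ℝ) ^ ((J:ℝ) * A)) * ((3 * Real.sqrt d) ^ s * (2:ℝ) ^ (-(J:ℝ) * s)) :=
                mul_le_mul_of_nonneg_right hN (by positivity)
            _ = (K * (3 * Real.sqrt d) ^ s) * ((2:ℝ) ^ ((J:ℝ) * A) * (2:ℝ) ^ (-(J:ℝ) * s)) := by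
                ring
            _ = (K * (3 * Real.sqrt d) ^ s) * ((2:ℝ) ^ (-θ)) ^ J := by rw [c2]
        calc (∑' k : ↥(E J), EMetric.diam (threeCube d J k.1) ^ s)
            ≤ ((E J).ncard : ℝ≥0∞) * ENNReal.ofReal ((3 * Real.sqrt d * (1/2:ℝ) ^ J) ^ s) :=
              hb2
          _ = ENNReal.ofReal (((E J).ncard : ℝ) * ((3 * Real.sqrt d * (1/2:ℝ) ^ J) ^ s)) := by
              rw [ENNReal.ofReal_mul (by positivity), ENNReal.ofReal_natCast]
          _ ≤ ENNReal.ofReal ((K * (3 * Real.sqrt d) ^ s) * ((2:ℝ) ^ (-θ)) ^ J) :=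
              ENNReal.ofReal_le_ofReal hreal
          _ = M0 * w ^ J := by
              rw [ENNReal.ofReal_mul (by positivity), ENNReal.ofReal_pow (by positivity), hM0, hw]
      calc (∑' i : (j : ℕ) × ↥(E (n + j)), EMetric.diam (threeCube d (n + i.1) i.2.1) ^ s)
          = ∑' j : ℕ, ∑' k : ↥(E (n + j)), EMetric.diam (threeCube d (n + j) k.1) ^ s :=
            ENNReal.tsum_sigma' _
        _ ≤ ∑' j : ℕ, M0 * w ^ (n + j) := ENNReal.tsum_le_tsum hterm
        _ = M0 * w ^ n * ∑' j : ℕ, w ^ j := by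
            simp_rw [pow_add, ← mul_assoc]
            rw [ENNReal.tsum_mul_left]
        _ = M0 * w ^ n * (1 - w)⁻¹ := by rw [ENNReal.tsum_geometric]
        _ ≤ M0 * 1 * (1 - w)⁻¹ := by
            gcongr
            exact pow_le_one' hw1.le n
        _ = M := by rw [hM, mul_one]
    have hMne : M ≠ ⊤ := by
      rw [hM]
      refine ENNReal.mul_ne_top ENNReal.ofReal_ne_top ?_
      rw [ENNReal.inv_ne_top]
      intro h0
      rw [tsub_eq_zero_iff_le] at h0
      exact absurd h0 (not_le.2 hw1)
    have hμ : μH[s] F ≠ ⊤ := by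
      refine ne_top_of_le_ne_top hMne (hcover.trans ?_)
      exact liminf_le_of_frequently_le'
        ((eventually_atTop.2 ⟨j₀, hsum_le⟩).frequently)
    have hcast : ((s.toNNReal : ℝ≥0∞)) = ENNReal.ofReal s := rfl
    rw [← hcast]
    refine dimH_le_of_hausdorffMeasure_ne_top ?_
    rwa [Real.coe_toNNReal s hs]
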